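/- Let ∇ be a covariant derivative on the cotangent bundle of a smooth manifold (or abstractly, a connection on a finitely generated projective module), and let g be a nondegenerate (not necessarily symmetric) 2-tensor. Define the conjugate connection *∇ by g(*∇_X Y, Z) + g(Y, ∇_X Z) = X(g(Y,Z)). Then the difference of the antisymmetrized covariant derivatives of g equals cotorsion minus torsion: ∇_μ g_{νρ} − ∇_ν g_{μρ} = CoTorsion_{μνρ} − Torsion_{μνρ}, where the cotorsion is the torsion of *∇ (with indices lowered by g). In particular, if both the torsion of ∇ and the torsion of *∇ vanish, then ∇_μ g_{νρ} − ∇_ν g_{μρ} = 0. -/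
import Mathlib


/-- Abstract setting: vector fields `V` (a module over the algebra of functions `A`),
a nondegenerate (not necessarily symmetric) 2-tensor `g`, a Lie bracket and an action
`δ` of vector fields on functions, a connection `D = ∇` and the conjugate connection
`D* = *∇` determined by `X(g(Y,Z)) = g(*∇_X Y, Z) + g(Y, ∇_X Z)`.  Then the
antisymmetrized covariant derivative of `g` equals cotorsion minus torsion:
`∇_μ g_{νρ} − ∇_ν g_{μρ} = CoTorsion_{μνρ} − Torsion_{μνρ}`, where the cotorsion is
the (lowered) torsion of `*∇`.  In particular, if both torsions vanish, then
`∇_μ g_{νρ} − ∇_ν g_{μρ} = 0`. -/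
theorem stmt18 (A : Type*) [CommRing A] (V : Type*) [AddCommGroup V] [Module A V]
    (g : V →ₗ[A] V →ₗ[A] A)
    (hnd : ∀ v : V, (∀ w : V, g v w = 0) → v = 0)
    (bracket : V → V → V)
    (δ : V → A → A)
    (D Dstar : V → V → V)
    (hcompat : ∀ X Y Z : V, δ X (g Y Z) = g (Dstar X Y) Z + g Y (D X Z)) :
    (∀ X Y Z : V,
      (δ X (g Y Z) - g (D X Y) Z - g Y (D X Z))
        - (δ Y (g X Z) - g (D Y X) Z - g X (D Y Z))
      = g (Dstar X Y - Dstar Y X - bracket X Y) Z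
        - g (D X Y - D Y X - bracket X Y) Z) ∧
    ((∀ X Y : V, D X Y - D Y X - bracket X Y = 0) →
     (∀ X Y : V, Dstar X Y - Dstar Y X - bracket X Y = 0) →
     ∀ X Y Z : V,
       (δ X (g Y Z) - g (D X Y) Z - g Y (D X Z))
         - (δ Y (g X Z) - g (D Y X) Z - g X (D Y Z)) = 0) := by
  constructor
  · intro X Y Z
    simp only [hcompat, map_sub, LinearMap.sub_apply]
    ring
  · intro h1 h2 X Y Z
    have e1 := h1 X Y
    have e2 := h2 X Y
    simp only [hcompat, map_sub, LinearMap.sub_apply]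
    have t2 := congrArg (fun v => g v Z) e2
    have t1 := congrArg (fun v => g v Z) e1
    simp only [map_sub, LinearMap.sub_apply, map_zero, LinearMap.zero_apply] at t1 t2
    linear_combination t2 - t1
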